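/- Fix δ ∈ (0, 1/e). Assume 𝓡 admits a finite ε-cover in sup norm of cardinality M, with ε = 1/(6·(1+e^{R̄})·N). Then with probability at least 1−δ over the draw of the N samples, simultaneously for every r ∈ 𝓡: L(r*) − L(r) ≤ −2·E_{(x,a¹,a⁰)∼μ_D}[ H²( σ(r*(x,a¹)−r*(x,a⁰)), σ(r(x,a¹)−r(x,a⁰)) ) ] + (3/N)·log(M/δ), where H²(p,q) = ½·[(√p − √q)² + (√(1−p) − √(1−q))²] is the squared Hellinger distance between Bernoulli(p) and Bernoulli(q). -/

import Mathlib

open MeasureTheory ProbabilityTheory Real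
open scoped ENNReal

/-- The sigmoid function `σ(z) = 1/(1+e^{−z})`. -/
noncomputable def sigmoid (z : ℝ) : ℝ := 1 / (1 + Real.exp (-z))

/-- Squared Hellinger distance between `Bernoulli(p)` and `Bernoulli(q)`. -/
noncomputable def hellingerSq (p q : ℝ) : ℝ :=
  (1 / 2) * ((Real.sqrt p - Real.sqrt q) ^ 2 + (Real.sqrt (1 - p) - Real.sqrt (1 - q)) ^ 2)

/-- The cross-entropy (negative log-likelihood) loss of the Bradley–Terry preference model
on a dataset of `N` tuples `(x_i, a_i¹, a_i⁰, y_i)`. -/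
noncomputable def BTLoss {X A : Type*} (N : ℕ) (data : Fin N → (X × A × A) × Bool)
    (r : X → A → ℝ) : ℝ :=
  -(1 / (N : ℝ)) * ∑ i : Fin N,
    (if (data i).2 then
      Real.log (_root_.sigmoid (r (data i).1.1 (data i).1.2.1 - r (data i).1.1 (data i).1.2.2))
    else
      Real.log (_root_.sigmoid (r (data i).1.1 (data i).1.2.2 - r (data i).1.1 (data i).1.2.1)))

lemma sigmoid_pos (z : ℝ) : 0 < _root_.sigmoid z := by
  have := Real.exp_pos (-z); unfold _root_.sigmoid; positivity

lemma sigmoid_lt_one (z : ℝ) : _root_.sigmoid z < 1 := by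
  have h := Real.exp_pos (-z)
  rw [_root_.sigmoid, div_lt_one (by linarith)]; linarith

lemma one_sub_sigmoid (z : ℝ) : 1 - _root_.sigmoid z = _root_.sigmoid (-z) := by
  have h1 := Real.exp_pos (-z); have h2 := Real.exp_pos z
  have hm : Real.exp (-z) * Real.exp z = 1 := by
    rw [← Real.exp_add]; simp
  rw [_root_.sigmoid, _root_.sigmoid, neg_neg]
  field_simp
  nlinarith [hm]

lemma sigmoid_mono : Monotone _root_.sigmoid := by
  intro a b hab
  have h1 := Real.exp_pos (-a); have h2 := Real.exp_pos (-b)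
  have : Real.exp (-b) ≤ Real.exp (-a) := Real.exp_le_exp.2 (by linarith)
  rw [_root_.sigmoid, _root_.sigmoid]
  apply one_div_le_one_div_of_le (by linarith) (by linarith)

lemma sigmoid_measurable : Measurable _root_.sigmoid := by
  apply Measurable.div measurable_const
  exact (measurable_const.add (Real.measurable_exp.comp measurable_neg))

lemma sigmoid_hasDerivAt (z : ℝ) :
    HasDerivAt _root_.sigmoid (Real.exp (-z) / (1 + Real.exp (-z)) ^ 2) z := by
  have h : HasDerivAt (fun z : ℝ => 1 + Real.exp (-z)) (-Real.exp (-z)) z := by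
    simpa using ((Real.hasDerivAt_exp (-z)).comp z (hasDerivAt_neg z)).const_add 1
  have hne : 1 + Real.exp (-z) ≠ 0 := by have := Real.exp_pos (-z); linarith
  have h2 := h.inv hne
  have : _root_.sigmoid = fun z : ℝ => (1 + Real.exp (-z))⁻¹ := by
    funext w; rw [_root_.sigmoid, one_div]
  rw [this]
  exact h2.congr_deriv (by ring)
lemma sigmoid_deriv_bound (z : ℝ) : Real.exp (-z) / (1 + Real.exp (-z)) ^ 2 ≤ 1 / 4 := by
  have h := Real.exp_pos (-z)
  rw [div_le_div_iff₀ (by positivity) (by norm_num)]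
  nlinarith [sq_nonneg (1 - Real.exp (-z))]

lemma sigmoid_lipschitz (a b : ℝ) : |_root_.sigmoid a - _root_.sigmoid b| ≤ (1/4) * |a - b| := by
  have := Convex.norm_image_sub_le_of_norm_hasDerivWithin_le
    (f := _root_.sigmoid) (f' := fun z => Real.exp (-z) / (1 + Real.exp (-z)) ^ 2)
    (C := 1/4) (s := Set.univ)
    (fun x _ => (sigmoid_hasDerivAt x).hasDerivWithinAt)
    (fun x _ => by
      rw [Real.norm_eq_abs, abs_of_nonneg (by positivity)]; exact sigmoid_deriv_bound x)
    convex_univ (Set.mem_univ b) (Set.mem_univ a)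
  simpa [Real.norm_eq_abs] using this

lemma logsigmoid_hasDerivAt (z : ℝ) :
    HasDerivAt (fun z => Real.log (_root_.sigmoid z)) (Real.exp (-z) / (1 + Real.exp (-z))) z := by
  have h := (sigmoid_hasDerivAt z).log (_root_.sigmoid_pos z).ne'
  convert h using 1
  have h1 := Real.exp_pos (-z)
  rw [_root_.sigmoid]
  field_simp

lemma logsigmoid_lipschitz (a b : ℝ) :
    |Real.log (_root_.sigmoid a) - Real.log (_root_.sigmoid b)| ≤ |a - b| := by
  have := Convex.norm_image_sub_le_of_norm_hasDerivWithin_le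
    (f := fun z => Real.log (_root_.sigmoid z)) (f' := fun z => Real.exp (-z) / (1 + Real.exp (-z)))
    (C := 1) (s := Set.univ)
    (fun x _ => (logsigmoid_hasDerivAt x).hasDerivWithinAt)
    (fun x _ => by
      have h1 := Real.exp_pos (-x)
      rw [Real.norm_eq_abs, abs_of_nonneg (by positivity), div_le_one (by linarith)]
      linarith)
    convex_univ (Set.mem_univ b) (Set.mem_univ a)
  simpa [Real.norm_eq_abs] using this

lemma neg_log_sigmoid_le {z R : ℝ} (h : -R ≤ z) :
    |Real.log (_root_.sigmoid z)| ≤ Real.log (1 + Real.exp R) := by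
  have h1 : _root_.sigmoid (-R) ≤ _root_.sigmoid z := sigmoid_mono h
  have h2 : _root_.sigmoid z < 1 := _root_.sigmoid_lt_one z
  have h3 : 0 < _root_.sigmoid (-R) := _root_.sigmoid_pos _
  have h4 : Real.log (_root_.sigmoid z) ≤ 0 := Real.log_nonpos (_root_.sigmoid_pos z).le h2.le
  rw [abs_of_nonpos h4]
  have h5 : Real.log (_root_.sigmoid (-R)) ≤ Real.log (_root_.sigmoid z) := Real.log_le_log h3 h1
  have : _root_.sigmoid (-R) = 1 / (1 + Real.exp R) := by rw [_root_.sigmoid, neg_neg]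
  rw [this, Real.log_div one_ne_zero (by positivity), Real.log_one] at h5
  linarith
lemma hellingerSq_eq {p q : ℝ} (hp0 : 0 ≤ p) (hp1 : p ≤ 1) (hq0 : 0 ≤ q) (hq1 : q ≤ 1) :
    1 - hellingerSq p q = Real.sqrt (p * q) + Real.sqrt ((1 - p) * (1 - q)) := by
  have e1 : Real.sqrt p ^ 2 = p := Real.sq_sqrt hp0
  have e2 : Real.sqrt q ^ 2 = q := Real.sq_sqrt hq0
  have e3 : Real.sqrt (1 - p) ^ 2 = 1 - p := Real.sq_sqrt (by linarith)
  have e4 : Real.sqrt (1 - q) ^ 2 = 1 - q := Real.sq_sqrt (by linarith)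
  rw [hellingerSq, Real.sqrt_mul hp0, Real.sqrt_mul (by linarith : (0:ℝ) ≤ 1 - p)]
  nlinarith [e1, e2, e3, e4]

lemma hellingerSq_nonneg (p q : ℝ) : 0 ≤ hellingerSq p q := by
  rw [hellingerSq]; positivity

lemma hellingerSq_le_one {p q : ℝ} (hp0 : 0 ≤ p) (hp1 : p ≤ 1) (hq0 : 0 ≤ q) (hq1 : q ≤ 1) :
    hellingerSq p q ≤ 1 := by
  have := hellingerSq_eq hp0 hp1 hq0 hq1
  have h1 : 0 ≤ Real.sqrt (p * q) := Real.sqrt_nonneg _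
  have h2 : 0 ≤ Real.sqrt ((1 - p) * (1 - q)) := Real.sqrt_nonneg _
  linarith

lemma sqrt_sub_le {c q q' : ℝ} (hc : 0 < c) (hq : c ≤ q) (hq' : c ≤ q') :
    |Real.sqrt q - Real.sqrt q'| ≤ |q - q'| / (2 * Real.sqrt c) := by
  have hcs : 0 < Real.sqrt c := Real.sqrt_pos.2 hc
  have h1 : Real.sqrt c ≤ Real.sqrt q := Real.sqrt_le_sqrt hq
  have h2 : Real.sqrt c ≤ Real.sqrt q' := Real.sqrt_le_sqrt hq'
  have hsum : 2 * Real.sqrt c ≤ Real.sqrt q + Real.sqrt q' := by linarith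
  have key : |Real.sqrt q - Real.sqrt q'| * (Real.sqrt q + Real.sqrt q') = |q - q'| := by
    rw [← abs_of_nonneg (by positivity : (0:ℝ) ≤ Real.sqrt q + Real.sqrt q'), ← abs_mul]
    congr 1
    have := Real.sq_sqrt (by linarith : (0:ℝ) ≤ q)
    have := Real.sq_sqrt (by linarith : (0:ℝ) ≤ q')
    ring_nf
    nlinarith
  rw [le_div_iff₀ (by positivity)]
  calc |Real.sqrt q - Real.sqrt q'| * (2 * Real.sqrt c)
      ≤ |Real.sqrt q - Real.sqrt q'| * (Real.sqrt q + Real.sqrt q') := by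
        apply mul_le_mul_of_nonneg_left hsum (abs_nonneg _)
    _ = |q - q'| := key

lemma hellingerSq_lipschitz {p q q' c : ℝ} (hp0 : 0 ≤ p) (hp1 : p ≤ 1)
    (hc : 0 < c) (hq : c ≤ q) (hq1 : c ≤ 1 - q) (hq' : c ≤ q') (hq1' : c ≤ 1 - q') :
    |hellingerSq p q - hellingerSq p q'| ≤ |q - q'| / Real.sqrt c := by
  have hq0 : 0 ≤ q := by linarith
  have hqle : q ≤ 1 := by linarith
  have hq0' : 0 ≤ q' := by linarith
  have hqle' : q' ≤ 1 := by linarith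
  have e1 := hellingerSq_eq hp0 hp1 hq0 hqle
  have e2 := hellingerSq_eq hp0 hp1 hq0' hqle'
  have hsp : Real.sqrt p ≤ 1 :=
    le_trans (Real.sqrt_le_sqrt hp1) (le_of_eq Real.sqrt_one)
  have hsp' : Real.sqrt (1 - p) ≤ 1 :=
    le_trans (Real.sqrt_le_sqrt (by linarith)) (le_of_eq Real.sqrt_one)
  have d1 : |Real.sqrt (p * q) - Real.sqrt (p * q')| ≤ |q - q'| / (2 * Real.sqrt c) := by
    rw [Real.sqrt_mul hp0, Real.sqrt_mul hp0, ← mul_sub, abs_mul,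
      abs_of_nonneg (Real.sqrt_nonneg p)]
    calc Real.sqrt p * |Real.sqrt q - Real.sqrt q'|
        ≤ 1 * |Real.sqrt q - Real.sqrt q'| := by
          apply mul_le_mul_of_nonneg_right hsp (abs_nonneg _)
      _ ≤ |q - q'| / (2 * Real.sqrt c) := by rw [one_mul]; exact sqrt_sub_le hc hq hq'
  have d2 : |Real.sqrt ((1-p) * (1-q)) - Real.sqrt ((1-p) * (1-q'))|
      ≤ |q - q'| / (2 * Real.sqrt c) := by
    rw [Real.sqrt_mul (by linarith), Real.sqrt_mul (by linarith), ← mul_sub, abs_mul,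
      abs_of_nonneg (Real.sqrt_nonneg _)]
    calc Real.sqrt (1-p) * |Real.sqrt (1-q) - Real.sqrt (1-q')|
        ≤ 1 * |Real.sqrt (1-q) - Real.sqrt (1-q')| := by
          apply mul_le_mul_of_nonneg_right hsp' (abs_nonneg _)
      _ ≤ |(1-q) - (1-q')| / (2 * Real.sqrt c) := by
          rw [one_mul]; exact sqrt_sub_le hc hq1 hq1'
      _ = |q - q'| / (2 * Real.sqrt c) := by rw [show (1-q) - (1-q') = -(q - q') by ring, abs_neg]
  have expand : hellingerSq p q - hellingerSq p q' =
      (Real.sqrt (p * q') - Real.sqrt (p * q)) +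
      (Real.sqrt ((1-p) * (1-q')) - Real.sqrt ((1-p) * (1-q))) := by linarith
  rw [expand]
  calc _ ≤ |Real.sqrt (p * q') - Real.sqrt (p * q)| +
        |Real.sqrt ((1-p) * (1-q')) - Real.sqrt ((1-p) * (1-q))| := abs_add_le _ _
    _ ≤ |q - q'| / (2 * Real.sqrt c) + |q - q'| / (2 * Real.sqrt c) := by
        rw [abs_sub_comm (Real.sqrt (p * q')), abs_sub_comm (Real.sqrt ((1-p) * (1-q')))]
        exact add_le_add d1 d2
    _ = |q - q'| / Real.sqrt c := by
        have hcs : 0 < Real.sqrt c := Real.sqrt_pos.2 hc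
        field_simp; ring

lemma exp_half_log_sub {a b : ℝ} (ha : 0 < a) (hb : 0 < b) :
    Real.exp ((Real.log a - Real.log b) / 2) = Real.sqrt a / Real.sqrt b := by
  have key : ∀ x : ℝ, 0 < x → Real.sqrt x = Real.exp (Real.log x / 2) := by
    intro x hx
    have : x = Real.exp (Real.log x / 2) ^ 2 := by
      rw [← Real.exp_nat_mul]
      push_cast
      rw [show (2:ℝ) * (Real.log x / 2) = Real.log x by ring, Real.exp_log hx]
    conv_lhs => rw [this]
    exact Real.sqrt_sq (Real.exp_pos _).le
  rw [key a ha, key b hb, ← Real.exp_sub]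
  ring_nf
noncomputable def dfn {X A : Type*} (r : X → A → ℝ) (z : X × A × A) : ℝ :=
  r z.1 z.2.1 - r z.1 z.2.2

noncomputable def ell {X A : Type*} (r : X → A → ℝ) (e : (X × A × A) × Bool) : ℝ :=
  if e.2 then Real.log (_root_.sigmoid (r e.1.1 e.1.2.1 - r e.1.1 e.1.2.2))
  else Real.log (_root_.sigmoid (r e.1.1 e.1.2.2 - r e.1.1 e.1.2.1))

lemma ell_eq {X A : Type*} (r : X → A → ℝ) (e : (X × A × A) × Bool) :
    ell r e = if e.2 then Real.log (_root_.sigmoid (dfn r e.1))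
      else Real.log (_root_.sigmoid (-(dfn r e.1))) := by
  rcases e with ⟨z, b⟩
  cases b <;> simp [ell, dfn, neg_sub]

section meas
variable {X A : Type*} [MeasurableSpace X] [MeasurableSpace A]

lemma dfn_measurable {r : X → A → ℝ} (hr : Measurable (Function.uncurry r)) :
    Measurable (dfn r) := by
  apply Measurable.sub
  · exact hr.comp (measurable_fst.prodMk (measurable_fst.comp measurable_snd))
  · exact hr.comp (measurable_fst.prodMk (measurable_snd.comp measurable_snd))

lemma dfn_bound {r : X → A → ℝ} {Rbar : ℝ} (hb : ∀ x a, r x a ∈ Set.Icc (0:ℝ) Rbar)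
    (z : X × A × A) : -Rbar ≤ dfn r z ∧ dfn r z ≤ Rbar := by
  have h1 := hb z.1 z.2.1
  have h2 := hb z.1 z.2.2
  simp only [Set.mem_Icc] at h1 h2
  constructor <;> [skip; skip] <;> (rw [dfn]) <;> [linarith; linarith]

lemma ell_measurable {r : X → A → ℝ} (hr : Measurable (Function.uncurry r)) :
    Measurable (ell r) := by
  have h1 : Measurable fun e : (X × A × A) × Bool => Real.log (_root_.sigmoid (dfn r e.1)) :=
    Real.measurable_log.comp (sigmoid_measurable.comp ((dfn_measurable hr).comp measurable_fst))
  have h2 : Measurable fun e : (X × A × A) × Bool => Real.log (_root_.sigmoid (-(dfn r e.1))) :=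
    Real.measurable_log.comp
      (sigmoid_measurable.comp (((dfn_measurable hr).comp measurable_fst).neg))
  have : ell r = fun e => if e.2 = true then Real.log (_root_.sigmoid (dfn r e.1))
      else Real.log (_root_.sigmoid (-(dfn r e.1))) := by
    funext e; rw [ell_eq]
  rw [this]
  exact Measurable.ite (measurable_snd (measurableSet_singleton true)) h1 h2

lemma ell_abs_le {r : X → A → ℝ} {Rbar : ℝ} (hRbar : 0 ≤ Rbar)
    (hb : ∀ x a, r x a ∈ Set.Icc (0:ℝ) Rbar) (e : (X × A × A) × Bool) :
    |ell r e| ≤ Real.log (1 + Real.exp Rbar) := by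
  rcases e with ⟨z, b⟩
  obtain ⟨hl, hu⟩ := dfn_bound hb z
  cases b
  · have h : ell r (z, false) = Real.log (_root_.sigmoid (-(dfn r z))) := by
      simp [ell, dfn, neg_sub]
    rw [h]; exact neg_log_sigmoid_le (by linarith)
  · have h : ell r (z, true) = Real.log (_root_.sigmoid (dfn r z)) := by
      simp [ell, dfn]
    rw [h]; exact neg_log_sigmoid_le hl

end meas

lemma integrable_of_bdd {α : Type*} [MeasurableSpace α] {μ : Measure α} [IsFiniteMeasure μ]
    {f : α → ℝ} {C : ℝ} (hf : Measurable f) (h : ∀ x, |f x| ≤ C) : Integrable f μ :=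
  ⟨hf.aestronglyMeasurable,
    HasFiniteIntegral.of_bounded (C := C) (ae_of_all _ fun x => by simpa using h x)⟩

lemma bool_integral (ν : Measure Bool) [IsFiniteMeasure ν] (f : Bool → ℝ) :
    ∫ y, f y ∂ν = (ν {true}).toReal * f true + (ν {false}).toReal * f false := by
  rw [integral_fintype (Integrable.of_finite)]
  simp [smul_eq_mul, Measure.real]

lemma sqrt_helper {p q : ℝ} (hp : 0 < p) (hq : 0 < q) :
    p * (Real.sqrt q / Real.sqrt p) = Real.sqrt (p * q) := by
  have hps : 0 < Real.sqrt p := Real.sqrt_pos.2 hp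
  rw [Real.sqrt_mul hp.le]
  rw [eq_comm, ← Real.mul_self_sqrt hp.le]
  field_simp
  rw [Real.sqrt_sq hps.le]

lemma bernoulli_mgf (ds d : ℝ) :
    _root_.sigmoid ds * Real.exp ((Real.log (_root_.sigmoid d) - Real.log (_root_.sigmoid ds)) / 2)
      + (1 - _root_.sigmoid ds) * Real.exp ((Real.log (_root_.sigmoid (-d)) - Real.log (_root_.sigmoid (-ds))) / 2)
    = 1 - hellingerSq (_root_.sigmoid ds) (_root_.sigmoid d) := by
  rw [exp_half_log_sub (_root_.sigmoid_pos d) (_root_.sigmoid_pos ds),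
    exp_half_log_sub (_root_.sigmoid_pos (-d)) (_root_.sigmoid_pos (-ds)),
    hellingerSq_eq (_root_.sigmoid_pos ds).le (_root_.sigmoid_lt_one ds).le
      (_root_.sigmoid_pos d).le (_root_.sigmoid_lt_one d).le,
    one_sub_sigmoid ds, one_sub_sigmoid d,
    sqrt_helper (_root_.sigmoid_pos ds) (_root_.sigmoid_pos d),
    sqrt_helper (_root_.sigmoid_pos (-ds)) (_root_.sigmoid_pos (-d))]
section pi
variable {E : Type*} [MeasurableSpace E]

lemma integrable_prod_pi (ν : Measure E) [IsProbabilityMeasure ν] {g : E → ℝ}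
    (hg : Integrable g ν) (N : ℕ) :
    Integrable (fun ω : Fin N → E => ∏ i, g (ω i)) (Measure.pi fun _ => ν) := by
  induction N with
  | zero =>
      simp only [Finset.univ_eq_empty, Finset.prod_empty]
      exact integrable_const 1
  | succ n ih =>
      have mp := (measurePreserving_piFinSuccAbove (fun _ : Fin (n+1) => (ν : Measure E)) 0).symm
      rw [← mp.integrable_comp_emb (MeasurableEquiv.measurableEmbedding _)]
      have : (fun ω : Fin (n+1) → E => ∏ i, g (ω i)) ∘
          (MeasurableEquiv.piFinSuccAbove (fun _ => E) 0).symm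
          = fun y : E × (Fin n → E) => g y.1 * ∏ i : Fin n, g (y.2 i) := by
        funext y
        simp only [Function.comp_apply, MeasurableEquiv.piFinSuccAbove_symm_apply,
          Fin.insertNthEquiv, Equiv.coe_fn_mk, Fin.insertNth_zero]
        rw [Fin.prod_univ_succ]
        simp [Fin.cons_zero, Fin.cons_succ, Fin.zero_succAbove]
      rw [this]
      exact hg.mul_prod (ih)

lemma integral_prod_pi (ν : Measure E) [IsProbabilityMeasure ν] {g : E → ℝ}
    (hg : Integrable g ν) (N : ℕ) :
    ∫ ω, (∏ i, g (ω i)) ∂(Measure.pi fun _ : Fin N => ν) = (∫ e, g e ∂ν) ^ N := by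
  induction N with
  | zero =>
      simp only [Finset.univ_eq_empty, Finset.prod_empty, pow_zero]
      rw [integral_const]
      simp
  | succ n ih =>
      have mp := (measurePreserving_piFinSuccAbove (fun _ : Fin (n+1) => (ν : Measure E)) 0).symm
      rw [← mp.integral_comp']
      have : (fun y : E × (Fin n → E) =>
          ∏ i : Fin (n+1), g ((MeasurableEquiv.piFinSuccAbove (fun _ => E) 0).symm y i))
          = fun y : E × (Fin n → E) => g y.1 * ∏ i : Fin n, g (y.2 i) := by
        funext y
        simp only [MeasurableEquiv.piFinSuccAbove_symm_apply,
          Fin.insertNthEquiv, Equiv.coe_fn_mk, Fin.insertNth_zero]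
        rw [Fin.prod_univ_succ]
        simp [Fin.cons_zero, Fin.cons_succ, Fin.zero_succAbove]
      simp only [this]
      rw [integral_prod_mul (f := g) (g := fun ω : Fin n → E => ∏ i, g (ω i)), ih, pow_succ]
      ring

end pi
lemma chernoff_pi {E : Type*} [MeasurableSpace E] (ν : Measure E) [IsProbabilityMeasure ν]
    {f : E → ℝ} (hf : Measurable f) {C : ℝ} (hbd : ∀ e, |f e| ≤ C) (N : ℕ) (t : ℝ) :
    (Measure.pi (fun _ : Fin N => ν) {ω | t ≤ ∑ i, f (ω i)}).toReal
      ≤ Real.exp (-t) * (∫ e, Real.exp (f e) ∂ν) ^ N := by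
  have hexp : Integrable (fun e : E => Real.exp (f e)) ν := by
    apply integrable_of_bdd (Real.measurable_exp.comp hf) (C := Real.exp C)
    intro e
    simp only [Function.comp_apply]
    rw [abs_of_pos (Real.exp_pos _)]
    exact Real.exp_le_exp.2 (le_trans (le_abs_self _) (hbd e))
  have hIntProd : Integrable (fun ω : Fin N → E => Real.exp (1 * ∑ i, f (ω i)))
      (Measure.pi fun _ => ν) := by
    refine (integrable_prod_pi ν hexp N).congr (ae_of_all _ fun ω => ?_)
    simp only [one_mul, Real.exp_sum]
  haveI : IsProbabilityMeasure (Measure.pi fun _ : Fin N => ν) := by infer_instance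
  have hch := @ProbabilityTheory.measure_ge_le_exp_mul_mgf (Fin N → E) _
    (fun ω => ∑ i, f (ω i)) (Measure.pi (fun _ : Fin N => ν)) 1
    (by infer_instance) t zero_le_one hIntProd
  refine le_trans hch ?_
  rw [neg_one_mul, mgf]
  have heq : (∫ ω, Real.exp (1 * ∑ i, f (ω i)) ∂(Measure.pi fun _ : Fin N => ν)) =
      (∫ e, Real.exp (f e) ∂ν) ^ N := by
    rw [← integral_prod_pi ν hexp N]
    congr 1
    funext ω
    rw [one_mul, Real.exp_sum]
  rw [heq]
section main
variable {X A : Type*} [MeasurableSpace X] [MeasurableSpace A]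

lemma hell_measurable {rstar r : X → A → ℝ} (hms : Measurable (Function.uncurry rstar))
    (hmr : Measurable (Function.uncurry r)) :
    Measurable (fun z => hellingerSq (_root_.sigmoid (dfn rstar z)) (_root_.sigmoid (dfn r z))) := by
  have m1 : Measurable fun z : X × A × A => _root_.sigmoid (dfn rstar z) :=
    sigmoid_measurable.comp (dfn_measurable hms)
  have m2 : Measurable fun z : X × A × A => _root_.sigmoid (dfn r z) :=
    sigmoid_measurable.comp (dfn_measurable hmr)
  unfold hellingerSq
  have s1 : Measurable fun z : X × A × A => Real.sqrt (_root_.sigmoid (dfn rstar z)) :=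
    Real.continuous_sqrt.measurable.comp m1
  have s2 : Measurable fun z : X × A × A => Real.sqrt (_root_.sigmoid (dfn r z)) :=
    Real.continuous_sqrt.measurable.comp m2
  have s3 : Measurable fun z : X × A × A => Real.sqrt (1 - _root_.sigmoid (dfn rstar z)) :=
    Real.continuous_sqrt.measurable.comp (measurable_const.sub m1)
  have s4 : Measurable fun z : X × A × A => Real.sqrt (1 - _root_.sigmoid (dfn r z)) :=
    Real.continuous_sqrt.measurable.comp (measurable_const.sub m2)
  exact measurable_const.mul (((s1.sub s2).pow_const 2).add ((s3.sub s4).pow_const 2))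

lemma step_integral {Rbar : ℝ} (hRbar : 0 < Rbar) {rstar r : X → A → ℝ}
    (hms : Measurable (Function.uncurry rstar))
    (hbs : ∀ x a, rstar x a ∈ Set.Icc (0:ℝ) Rbar)
    (hmr : Measurable (Function.uncurry r))
    (hbr : ∀ x a, r x a ∈ Set.Icc (0:ℝ) Rbar)
    (μD : Measure (X × A × A)) [IsProbabilityMeasure μD]
    (κ : Kernel (X × A × A) Bool) [IsMarkovKernel κ]
    (hκ : ∀ z : X × A × A,
      κ z {true} = ENNReal.ofReal (_root_.sigmoid (rstar z.1 z.2.1 - rstar z.1 z.2.2))) :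
    ∫ e, Real.exp ((ell r e - ell rstar e) / 2) ∂(μD ⊗ₘ κ)
      = 1 - ∫ z, hellingerSq (_root_.sigmoid (dfn rstar z)) (_root_.sigmoid (dfn r z)) ∂μD := by
  set C0 := Real.log (1 + Real.exp Rbar) with hC0
  have hFmeas : Measurable fun e : (X × A × A) × Bool =>
      Real.exp ((ell r e - ell rstar e) / 2) :=
    Real.measurable_exp.comp (((ell_measurable hmr).sub (ell_measurable hms)).div_const 2)
  have hFbd : ∀ e, |Real.exp ((ell r e - ell rstar e) / 2)| ≤ Real.exp C0 := by
    intro e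
    rw [abs_of_pos (Real.exp_pos _)]
    apply Real.exp_le_exp.2
    have h1 := ell_abs_le hRbar.le hbr e
    have h2 := ell_abs_le hRbar.le hbs e
    rw [abs_le] at h1 h2
    rw [div_le_iff₀ (by norm_num : (0:ℝ) < 2)]
    have hC0nn : 0 ≤ C0 := Real.log_nonneg (by nlinarith [Real.exp_pos Rbar])
    linarith [h1.2, h2.1]
  have hInt : Integrable (fun e => Real.exp ((ell r e - ell rstar e) / 2)) (μD ⊗ₘ κ) :=
    integrable_of_bdd hFmeas hFbd
  rw [Measure.integral_compProd hInt]
  have hinner : ∀ z : X × A × A,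
      (∫ y, Real.exp ((ell r (z, y) - ell rstar (z, y)) / 2) ∂κ z)
        = 1 - hellingerSq (_root_.sigmoid (dfn rstar z)) (_root_.sigmoid (dfn r z)) := by
    intro z
    rw [bool_integral]
    have htrue : (κ z {true}).toReal = _root_.sigmoid (dfn rstar z) := by
      rw [hκ z, ENNReal.toReal_ofReal (_root_.sigmoid_pos _).le]; rfl
    have hfalse : (κ z {false}).toReal = 1 - _root_.sigmoid (dfn rstar z) := by
      have hset : ({false} : Set Bool) = {true}ᶜ := by
        ext b; cases b <;> simp
      rw [hset, measure_compl (measurableSet_singleton true) (measure_ne_top _ _),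
        measure_univ, hκ z, ← ENNReal.ofReal_one,
        ← ENNReal.ofReal_sub _ (_root_.sigmoid_pos _).le,
        ENNReal.toReal_ofReal (by linarith [_root_.sigmoid_lt_one (rstar z.1 z.2.1 - rstar z.1 z.2.2)])]
      rfl
    have e1 : ell r (z, true) = Real.log (_root_.sigmoid (dfn r z)) := by simp [ell, dfn]
    have e2 : ell rstar (z, true) = Real.log (_root_.sigmoid (dfn rstar z)) := by simp [ell, dfn]
    have e3 : ell r (z, false) = Real.log (_root_.sigmoid (-(dfn r z))) := by
      simp [ell, dfn, neg_sub]
    have e4 : ell rstar (z, false) = Real.log (_root_.sigmoid (-(dfn rstar z))) := by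
      simp [ell, dfn, neg_sub]
    rw [htrue, hfalse, e1, e2, e3, e4]
    exact bernoulli_mgf (dfn rstar z) (dfn r z)
  rw [integral_congr_ae (ae_of_all _ hinner)]
  have hHmeas := hell_measurable hms hmr
  have hHint : Integrable (fun z => hellingerSq (_root_.sigmoid (dfn rstar z)) (_root_.sigmoid (dfn r z))) μD := by
    apply integrable_of_bdd hHmeas (C := 1)
    intro z
    rw [abs_of_nonneg (hellingerSq_nonneg _ _)]
    exact hellingerSq_le_one (_root_.sigmoid_pos _).le (_root_.sigmoid_lt_one _).le
      (_root_.sigmoid_pos _).le (_root_.sigmoid_lt_one _).le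
  rw [integral_sub (integrable_const 1) hHint, integral_const, probReal_univ]
  simp

end main
lemma ell_close {X A : Type*} (r r' : X → A → ℝ) {c : ℝ}
    (h : ∀ x a, |r x a - r' x a| ≤ c) (e : (X × A × A) × Bool) :
    |ell r e - ell r' e| ≤ 2 * c := by
  have hd : |dfn r e.1 - dfn r' e.1| ≤ 2 * c := by
    have h1 := h e.1.1 e.1.2.1
    have h2 := h e.1.1 e.1.2.2
    rw [abs_le] at h1 h2 ⊢
    rw [dfn, dfn]
    constructor <;> [linarith [h1.1, h2.2]; linarith [h1.2, h2.1]]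
  rw [ell_eq r e, ell_eq r' e]
  rcases e with ⟨z, b⟩
  cases b
  · simp only [Bool.false_eq_true, if_false]
    refine le_trans (logsigmoid_lipschitz _ _) ?_
    rw [neg_sub_neg, abs_sub_comm]
    exact hd
  · simp only [if_true]
    exact le_trans (logsigmoid_lipschitz _ _) hd

lemma hell_close {p d d' R : ℝ} (hp0 : 0 ≤ p) (hp1 : p ≤ 1) (hR : 0 ≤ R)
    (hd : -R ≤ d) (hd' : d ≤ R) (he : -R ≤ d') (he' : d' ≤ R) :
    |hellingerSq p (_root_.sigmoid d) - hellingerSq p (_root_.sigmoid d')|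
      ≤ (1 + Real.exp R) * (|d - d'| / 4) := by
  set c : ℝ := (1 + Real.exp R)⁻¹ with hc
  have hexpR : (1:ℝ) ≤ Real.exp R := Real.one_le_exp hR
  have hcpos : 0 < c := by rw [hc]; positivity
  have hsc : _root_.sigmoid (-R) = c := by
    rw [_root_.sigmoid, neg_neg, one_div, hc]
  have hlow : ∀ z : ℝ, -R ≤ z → c ≤ _root_.sigmoid z := fun z hz => hsc ▸ sigmoid_mono hz
  have hq1 : c ≤ _root_.sigmoid d := hlow d hd
  have hq2 : c ≤ 1 - _root_.sigmoid d := by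
    rw [one_sub_sigmoid]; exact hlow (-d) (by linarith)
  have hq3 : c ≤ _root_.sigmoid d' := hlow d' he
  have hq4 : c ≤ 1 - _root_.sigmoid d' := by
    rw [one_sub_sigmoid]; exact hlow (-d') (by linarith)
  have hlip := hellingerSq_lipschitz hp0 hp1 hcpos hq1 hq2 hq3 hq4
  refine le_trans hlip ?_
  have hsq : Real.sqrt c = c / Real.sqrt c := by
    rw [eq_div_iff (Real.sqrt_pos.2 hcpos).ne', Real.mul_self_sqrt hcpos.le]
  have hsqrtc : 0 < Real.sqrt c := Real.sqrt_pos.2 hcpos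
  have hsinv : 1 / Real.sqrt c ≤ 1 + Real.exp R := by
    rw [div_le_iff₀ hsqrtc]
    have h1 : Real.sqrt ((1 + Real.exp R)⁻¹) = (Real.sqrt (1 + Real.exp R))⁻¹ :=
      Real.sqrt_inv _
    rw [hc, h1]
    have hs2 : Real.sqrt (1 + Real.exp R) ≤ 1 + Real.exp R := by
      have h3 := Real.sqrt_le_sqrt (show (1 + Real.exp R) ≤ (1 + Real.exp R)^2 by nlinarith)
      rwa [Real.sqrt_sq (by positivity)] at h3
    have hspos : 0 < Real.sqrt (1 + Real.exp R) := Real.sqrt_pos.2 (by positivity)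
    calc (1:ℝ) = Real.sqrt (1 + Real.exp R) * (Real.sqrt (1 + Real.exp R))⁻¹ :=
          (mul_inv_cancel₀ hspos.ne').symm
      _ ≤ (1 + Real.exp R) * (Real.sqrt (1 + Real.exp R))⁻¹ := by
          apply mul_le_mul_of_nonneg_right hs2 (by positivity)
  have hsig := sigmoid_lipschitz d d'
  calc |_root_.sigmoid d - _root_.sigmoid d'| / Real.sqrt c
      = |_root_.sigmoid d - _root_.sigmoid d'| * (1 / Real.sqrt c) := by ring
    _ ≤ ((1/4) * |d - d'|) * (1 + Real.exp R) := by
        apply mul_le_mul hsig hsinv (by positivity) (by positivity)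
    _ = (1 + Real.exp R) * (|d - d'| / 4) := by ring
lemma dfn_close {X A : Type*} {r r' : X → A → ℝ} {c : ℝ}
    (h : ∀ x a, |r x a - r' x a| ≤ c) (z : X × A × A) :
    |dfn r z - dfn r' z| ≤ 2 * c := by
  have h1 := h z.1 z.2.1
  have h2 := h z.1 z.2.2
  rw [abs_le] at h1 h2 ⊢
  rw [dfn, dfn]
  constructor <;> [linarith [h1.1, h2.2]; linarith [h1.2, h2.1]]

set_option maxHeartbeats 1000000 in
/-- Uniform concentration of the Bradley–Terry maximum-likelihood loss: with probability at
least `1 − δ` over `N` i.i.d. preference samples, simultaneously for every `r` in the reward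
class, `L(r*) − L(r)` is bounded by minus twice the expected squared Hellinger distance plus
`(3/N)·log(M/δ)`. -/
theorem uniform_concentration_BTLoss
    {X A : Type*} [MeasurableSpace X] [MeasurableSpace A]
    (Rbar : ℝ) (hRbar : 0 < Rbar)
    (𝓡 : Set (X → A → ℝ))
    (h𝓡meas : ∀ r ∈ 𝓡, Measurable (Function.uncurry r))
    (h𝓡bdd : ∀ r ∈ 𝓡, ∀ x a, r x a ∈ Set.Icc (0 : ℝ) Rbar)
    (rstar : X → A → ℝ) (hrstar : rstar ∈ 𝓡)
    (μD : Measure (X × A × A)) [IsProbabilityMeasure μD]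
    (κ : Kernel (X × A × A) Bool) [IsMarkovKernel κ]
    (hκ : ∀ z : X × A × A,
      κ z {true} = ENNReal.ofReal (_root_.sigmoid (rstar z.1 z.2.1 - rstar z.1 z.2.2)))
    (N : ℕ) (hN : 0 < N)
    (δ : ℝ) (hδ : 0 < δ) (hδ' : δ < 1 / Real.exp 1)
    (M : ℕ) (hM : 0 < M) (cover : Fin M → X → A → ℝ)
    (hcover : ∀ r ∈ 𝓡, ∃ j : Fin M, ∀ x a,
      |r x a - cover j x a| ≤ 1 / (6 * (1 + Real.exp Rbar) * N)) :
    ENNReal.ofReal (1 - δ) ≤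
      Measure.pi (fun _ : Fin N => μD ⊗ₘ κ)
        {ω | ∀ r ∈ 𝓡,
          BTLoss N ω rstar - BTLoss N ω r ≤
            -2 * (∫ z, hellingerSq (_root_.sigmoid (rstar z.1 z.2.1 - rstar z.1 z.2.2))
                (_root_.sigmoid (r z.1 z.2.1 - r z.1 z.2.2)) ∂μD)
              + (3 / N) * Real.log (M / δ)} := by
  classical
  have hms := h𝓡meas rstar hrstar
  have hbs := h𝓡bdd rstar hrstar
  set ε : ℝ := 1 / (6 * (1 + Real.exp Rbar) * N) with hε
  -- numeric facts
  have hNR : (0:ℝ) < N := by exact_mod_cast hN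
  have hE1 : (1:ℝ) ≤ Real.exp Rbar := Real.one_le_exp hRbar.le
  have hE : (0:ℝ) < 1 + Real.exp Rbar := by linarith
  have hεpos : 0 < ε := by rw [hε]; positivity
  have hMR : (1:ℝ) ≤ M := by exact_mod_cast hM
  have hMδ : (0:ℝ) < (M:ℝ) / δ := by positivity
  have hlog : 1 ≤ Real.log ((M:ℝ) / δ) := by
    have hδe : δ * Real.exp 1 < 1 := by
      rw [← lt_div_iff₀ (Real.exp_pos 1)]; exact hδ'
    have h1 : Real.exp 1 ≤ (M:ℝ) / δ := by
      rw [le_div_iff₀ hδ]; nlinarith [Real.exp_pos 1]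
    calc (1:ℝ) = Real.log (Real.exp 1) := (Real.log_exp 1).symm
      _ ≤ Real.log ((M:ℝ)/δ) := Real.log_le_log (Real.exp_pos 1) h1
  have hε4 : 4 * ε ≤ 1 / (3 * (N:ℝ)) := by
    rw [hε, mul_one_div, div_le_div_iff₀ (by positivity) (by positivity)]
    nlinarith
  have hεe : (1 + Real.exp Rbar) * ε = 1 / (6 * (N:ℝ)) := by
    rw [hε]; field_simp
  -- representatives of the cover inside 𝓡
  have hrep : ∀ j : Fin M, ∃ r', r' ∈ 𝓡 ∧ ∀ r ∈ 𝓡,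
      (∀ x a, |r x a - cover j x a| ≤ ε) → ∀ x a, |r x a - r' x a| ≤ 2 * ε := by
    intro j
    by_cases hj : ∃ r0 ∈ 𝓡, ∀ x a, |r0 x a - cover j x a| ≤ ε
    · obtain ⟨r0, hr0, hr0c⟩ := hj
      refine ⟨r0, hr0, fun r hr hrc x a => ?_⟩
      calc |r x a - r0 x a| ≤ |r x a - cover j x a| + |cover j x a - r0 x a| :=
            abs_sub_le _ _ _
        _ ≤ ε + ε := add_le_add (hrc x a) (by rw [abs_sub_comm]; exact hr0c x a)
        _ = 2 * ε := by ring
    · exact ⟨rstar, hrstar, fun r hr hrc => absurd ⟨r, hr, hrc⟩ hj⟩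
  choose rep hrepmem hrepclose using hrep
  set ν : Measure ((X × A × A) × Bool) := μD ⊗ₘ κ with hν
  set P : Measure (Fin N → (X × A × A) × Bool) := Measure.pi (fun _ => ν) with hP
  set C0 : ℝ := Real.log (1 + Real.exp Rbar) with hC0
  set Ih : Fin M → ℝ := fun j =>
    ∫ z, hellingerSq (_root_.sigmoid (dfn rstar z)) (_root_.sigmoid (dfn (rep j) z)) ∂μD with hIh
  set fj : Fin M → ((X × A × A) × Bool) → ℝ := fun j e =>
    (ell (rep j) e - ell rstar e) / 2 with hfj
  set tj : Fin M → ℝ := fun j => Real.log ((M:ℝ) / δ) - N * Ih j with htj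
  set B : Fin M → Set (Fin N → (X × A × A) × Bool) := fun j =>
    {ω | tj j ≤ ∑ i, fj j (ω i)} with hB
  -- generic integrability of the Hellinger integrand
  have hHintGen : ∀ r' : X → A → ℝ, Measurable (Function.uncurry r') →
      Integrable (fun z => hellingerSq (_root_.sigmoid (dfn rstar z)) (_root_.sigmoid (dfn r' z))) μD := by
    intro r' hm
    apply integrable_of_bdd (hell_measurable hms hm) (C := 1)
    intro z
    rw [abs_of_nonneg (hellingerSq_nonneg _ _)]
    exact hellingerSq_le_one (_root_.sigmoid_pos _).le (_root_.sigmoid_lt_one _).le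
      (_root_.sigmoid_pos _).le (_root_.sigmoid_lt_one _).le
  have hfmeas : ∀ j, Measurable (fj j) := by
    intro j
    rw [hfj]
    exact ((ell_measurable (h𝓡meas _ (hrepmem j))).sub (ell_measurable hms)).div_const 2
  have hfbd : ∀ j, ∀ e, |fj j e| ≤ C0 := by
    intro j e
    have h1 := ell_abs_le hRbar.le (h𝓡bdd _ (hrepmem j)) e
    have h2 := ell_abs_le hRbar.le hbs e
    rw [abs_le] at h1 h2 ⊢
    rw [hfj]
    constructor <;> simp only [] <;> [linarith [h1.1, h2.2]; linarith [h1.2, h2.1]]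
  have hBmeas : ∀ j, MeasurableSet (B j) := by
    intro j
    rw [hB]
    exact measurableSet_le measurable_const
      (Finset.measurable_sum Finset.univ fun i _ => (hfmeas j).comp (measurable_pi_apply i))
  -- per-element tail bound
  have hIh0 : ∀ j, 0 ≤ Ih j := by
    intro j; rw [hIh]
    exact integral_nonneg fun z => hellingerSq_nonneg _ _
  have hIh1 : ∀ j, Ih j ≤ 1 := by
    intro j
    rw [hIh]
    calc (∫ z, hellingerSq (_root_.sigmoid (dfn rstar z)) (_root_.sigmoid (dfn (rep j) z)) ∂μD)
        ≤ ∫ _z, (1:ℝ) ∂μD := by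
          apply integral_mono (hHintGen _ (h𝓡meas _ (hrepmem j))) (integrable_const 1)
          intro z
          exact hellingerSq_le_one (_root_.sigmoid_pos _).le (_root_.sigmoid_lt_one _).le
            (_root_.sigmoid_pos _).le (_root_.sigmoid_lt_one _).le
      _ = 1 := by rw [integral_const, probReal_univ]; simp
  have hBbound : ∀ j, P (B j) ≤ ENNReal.ofReal (δ / M) := by
    intro j
    have hstep := step_integral hRbar hms hbs (h𝓡meas _ (hrepmem j)) (h𝓡bdd _ (hrepmem j))
      μD κ hκ
    have hch := chernoff_pi ν (hfmeas j) (hfbd j) N (tj j)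
    rw [hfj] at hch
    simp only [] at hch
    rw [hstep] at hch
    have hfin : (P (B j)).toReal ≤ Real.exp (-(tj j)) * (1 - Ih j) ^ N := by
      rw [hB, hP]
      exact hch
    have hfactor : Real.exp ((N:ℝ) * Ih j) * (1 - Ih j) ^ N ≤ 1 := by
      have h1 : Real.exp ((N:ℝ) * Ih j) = (Real.exp (Ih j)) ^ N := by
        rw [← Real.exp_nat_mul]
      rw [h1, ← mul_pow]
      apply pow_le_one₀
      · apply mul_nonneg (Real.exp_pos _).le
        linarith [hIh1 j]
      · have h2 := Real.add_one_le_exp (-(Ih j))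
        have h3 : (1 - Ih j) * Real.exp (Ih j) ≤ Real.exp (-(Ih j)) * Real.exp (Ih j) := by
          apply mul_le_mul_of_nonneg_right (by linarith) (Real.exp_pos _).le
        rw [← Real.exp_add, neg_add_cancel, Real.exp_zero] at h3
        calc Real.exp (Ih j) * (1 - Ih j) = (1 - Ih j) * Real.exp (Ih j) := by ring
          _ ≤ 1 := h3
    have hexp : Real.exp (-(tj j)) = Real.exp ((N:ℝ) * Ih j) * (δ / M) := by
      rw [htj]
      simp only []
      rw [neg_sub, sub_eq_add_neg, Real.exp_add, Real.exp_neg, Real.exp_log hMδ]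
      rw [inv_div]
    have h4 : (P (B j)).toReal ≤ δ / M := by
      calc (P (B j)).toReal ≤ Real.exp (-(tj j)) * (1 - Ih j) ^ N := hfin
        _ = (Real.exp ((N:ℝ) * Ih j) * (1 - Ih j) ^ N) * (δ / M) := by
            rw [hexp]; ring
        _ ≤ 1 * (δ / M) := by
            apply mul_le_mul_of_nonneg_right hfactor (by positivity)
        _ = δ / M := one_mul _
    calc P (B j) = ENNReal.ofReal ((P (B j)).toReal) :=
          (ENNReal.ofReal_toReal (measure_ne_top _ _)).symm
      _ ≤ ENNReal.ofReal (δ / M) := ENNReal.ofReal_le_ofReal h4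
  -- union bound
  have hU : P (⋃ j, B j) ≤ ENNReal.ofReal δ := by
    calc P (⋃ j, B j) ≤ ∑' j, P (B j) := measure_iUnion_le _
      _ = ∑ j, P (B j) := tsum_fintype _
      _ ≤ ∑ _j : Fin M, ENNReal.ofReal (δ / M) :=
          Finset.sum_le_sum fun j _ => hBbound j
      _ = (M : ℝ≥0∞) * ENNReal.ofReal (δ / M) := by
          rw [Finset.sum_const, Finset.card_univ, Fintype.card_fin, nsmul_eq_mul]
      _ = ENNReal.ofReal δ := by
          rw [← ENNReal.ofReal_natCast M, ← ENNReal.ofReal_mul (Nat.cast_nonneg M)]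
          congr 1
          field_simp
  -- the deterministic part: complement of the union is inside the target event
  have hsub : (⋃ j, B j)ᶜ ⊆
      {ω | ∀ r ∈ 𝓡,
        BTLoss N ω rstar - BTLoss N ω r ≤
          -2 * (∫ z, hellingerSq (_root_.sigmoid (rstar z.1 z.2.1 - rstar z.1 z.2.2))
              (_root_.sigmoid (r z.1 z.2.1 - r z.1 z.2.2)) ∂μD)
            + (3 / N) * Real.log (M / δ)} := by
    intro ω hω
    intro r hr
    have hmr := h𝓡meas r hr
    have hbr := h𝓡bdd r hr
    obtain ⟨j, hj⟩ := hcover r hr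
    have hclose : ∀ x a, |r x a - rep j x a| ≤ 2 * ε := hrepclose j r hr hj
    have hωj : ∑ i, fj j (ω i) < tj j := by
      have h1 : ω ∉ B j := fun h => hω (Set.mem_iUnion.2 ⟨j, h⟩)
      rw [hB] at h1
      exact not_le.1 h1
    -- loss difference identity
    have hBT : ∀ q : X → A → ℝ, BTLoss N ω q = -(1/(N:ℝ)) * ∑ i, ell q (ω i) := fun q => rfl
    have hsum : BTLoss N ω rstar - BTLoss N ω r
        = (1/(N:ℝ)) * ∑ i, (ell r (ω i) - ell rstar (ω i)) := by
      rw [hBT, hBT, Finset.sum_sub_distrib]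
      ring
    -- decompose and bound the sum
    have hdecomp : ∑ i, (ell r (ω i) - ell rstar (ω i))
        = (∑ i, (ell r (ω i) - ell (rep j) (ω i))) + 2 * ∑ i, fj j (ω i) := by
      rw [Finset.mul_sum, ← Finset.sum_add_distrib]
      apply Finset.sum_congr rfl
      intro i _
      rw [hfj]
      ring
    have hterm : ∑ i, (ell r (ω i) - ell (rep j) (ω i)) ≤ (N:ℝ) * (4 * ε) := by
      calc ∑ i, (ell r (ω i) - ell (rep j) (ω i)) ≤ ∑ _i : Fin N, (4 * ε) := by
            apply Finset.sum_le_sum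
            intro i _
            have h1 := ell_close r (rep j) hclose (ω i)
            have h2 := le_of_abs_le h1
            linarith
        _ = (N:ℝ) * (4 * ε) := by
            rw [Finset.sum_const, Finset.card_univ, Fintype.card_fin, nsmul_eq_mul]
    have hA : ∑ i, (ell r (ω i) - ell rstar (ω i)) ≤ (N:ℝ) * (4 * ε) + 2 * tj j := by
      rw [hdecomp]
      have := hωj
      linarith
    -- compare Hellinger integrals
    have hIhr : (∫ z, hellingerSq (_root_.sigmoid (dfn rstar z)) (_root_.sigmoid (dfn r z)) ∂μD)
        ≤ Ih j + 1 / (6 * (N:ℝ)) := by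
      rw [hIh]
      simp only []
      have hmono : ∀ z, hellingerSq (_root_.sigmoid (dfn rstar z)) (_root_.sigmoid (dfn r z))
          ≤ hellingerSq (_root_.sigmoid (dfn rstar z)) (_root_.sigmoid (dfn (rep j) z)) + 1 / (6 * (N:ℝ)) := by
        intro z
        obtain ⟨hd1, hd2⟩ := dfn_bound hbr z
        obtain ⟨hd3, hd4⟩ := dfn_bound (h𝓡bdd _ (hrepmem j)) z
        have hcl := dfn_close hclose z
        have hhc := hell_close (_root_.sigmoid_pos (dfn rstar z)).le (_root_.sigmoid_lt_one (dfn rstar z)).le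
          hRbar.le hd1 hd2 hd3 hd4
        have h5 : (1 + Real.exp Rbar) * (|dfn r z - dfn (rep j) z| / 4)
            ≤ (1 + Real.exp Rbar) * ((2 * (2 * ε)) / 4) := by
          apply mul_le_mul_of_nonneg_left _ hE.le
          apply div_le_div_of_nonneg_right hcl (by norm_num)
        have h6 : (1 + Real.exp Rbar) * ((2 * (2 * ε)) / 4) = 1 / (6 * (N:ℝ)) := by
          rw [← hεe]; ring
        have h7 := le_of_abs_le hhc
        linarith
      calc (∫ z, hellingerSq (_root_.sigmoid (dfn rstar z)) (_root_.sigmoid (dfn r z)) ∂μD)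
          ≤ ∫ z, (hellingerSq (_root_.sigmoid (dfn rstar z)) (_root_.sigmoid (dfn (rep j) z))
              + 1 / (6 * (N:ℝ))) ∂μD := by
            apply integral_mono (hHintGen r hmr)
              ((hHintGen _ (h𝓡meas _ (hrepmem j))).add (integrable_const _)) hmono
        _ = (∫ z, hellingerSq (_root_.sigmoid (dfn rstar z)) (_root_.sigmoid (dfn (rep j) z)) ∂μD)
              + 1 / (6 * (N:ℝ)) := by
            rw [integral_add (hHintGen _ (h𝓡meas _ (hrepmem j))) (integrable_const _),
              integral_const, probReal_univ]
            simp
    -- final arithmetic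
    show BTLoss N ω rstar - BTLoss N ω r ≤
        -2 * (∫ z, hellingerSq (_root_.sigmoid (dfn rstar z)) (_root_.sigmoid (dfn r z)) ∂μD)
          + (3 / (N:ℝ)) * Real.log ((M:ℝ) / δ)
    set Ihr : ℝ := ∫ z, hellingerSq (_root_.sigmoid (dfn rstar z)) (_root_.sigmoid (dfn r z)) ∂μD with hIhrdef
    rw [hsum]
    have hstep1 : (1/(N:ℝ)) * ∑ i, (ell r (ω i) - ell rstar (ω i))
        ≤ (1/(N:ℝ)) * ((N:ℝ) * (4 * ε) + 2 * tj j) := by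
      apply mul_le_mul_of_nonneg_left hA (by positivity)
    refine le_trans hstep1 ?_
    rw [htj]
    simp only []
    have hexpand : (1/(N:ℝ)) * ((N:ℝ) * (4 * ε) + 2 * (Real.log ((M:ℝ)/δ) - (N:ℝ) * Ih j))
        = 4 * ε + 2 * (Real.log ((M:ℝ)/δ) / (N:ℝ)) - 2 * Ih j := by
      field_simp
      ring
    rw [hexpand]
    have h3N : (1:ℝ) / (3 * (N:ℝ)) = (1 / (N:ℝ)) / 3 := by ring
    have hlogN : 1 / (N:ℝ) ≤ Real.log ((M:ℝ)/δ) / (N:ℝ) :=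
      (div_le_div_iff_of_pos_right hNR).2 hlog
    have hfinal : 4 * ε + 2 * (Real.log ((M:ℝ)/δ) / (N:ℝ)) - 2 * Ih j
        ≤ -2 * Ihr + (3 / (N:ℝ)) * Real.log ((M:ℝ)/δ) := by
      have h8 : (3 / (N:ℝ)) * Real.log ((M:ℝ)/δ) = 3 * (Real.log ((M:ℝ)/δ) / (N:ℝ)) := by
        ring
      rw [h8]
      have h9 : 1 / (6 * (N:ℝ)) = 1 / (3 * (N:ℝ)) / 2 := by
        field_simp
        ring
      linarith [hIhr, hε4, hlogN, h3N]
    exact hfinal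
  -- conclude
  have hUmeas : MeasurableSet (⋃ j, B j) := MeasurableSet.iUnion fun j => hBmeas j
  calc ENNReal.ofReal (1 - δ) = 1 - ENNReal.ofReal δ := by
        rw [← ENNReal.ofReal_one, ← ENNReal.ofReal_sub _ hδ.le]
    _ ≤ 1 - P (⋃ j, B j) := tsub_le_tsub_left hU 1
    _ = P ((⋃ j, B j)ᶜ) := by
        rw [measure_compl hUmeas (measure_ne_top _ _), measure_univ]
    _ ≤ _ := measure_mono hsub
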